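/- With notation as above (f_{i,0} = y^i, f_{i,r+1} = Δ_{x_r,x_{r+1}} f_{i,r}, x_0 = y), and working with finitely many variables x_1,…,x_R, the telescoping sum ∑_{r=0}^{R} f_{i,r} equals (1-q)^{-1}·h_i[(1-q)(y + x_1 + ⋯ + x_R)]. -/

import Mathlib

/-!
STATEMENT 5: With f_{i,0} = y^i, f_{i,r+1} = Δ_{x_r,x_{r+1}} f_{i,r} (x_0 = y; y = X 0,
x_j = X j over ℚ(q)), working with the variables y, x_1, …, x_R, the telescoping sum
∑_{r=0}^{R} f_{i,r} = (1-q)⁻¹ · h_i[(1-q)(y + x_1 + ⋯ + x_R)], where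
h_i[(1-q)Z] = ∑_{a+b=i} (-q)^b e_b(Z) h_a(Z).
-/

noncomputable section
open MvPolynomial

abbrev K : Type := RatFunc ℚ

noncomputable def q : K := RatFunc.X

/-- elementary symmetric polynomial of the variables in `S` -/
noncomputable def myE (S : Finset ℕ) (n : ℕ) : MvPolynomial ℕ K :=
  ∑ T ∈ S.powersetCard n, ∏ i ∈ T, X i

/-- complete homogeneous symmetric polynomial of the variables in `S` -/
noncomputable def myH (S : Finset ℕ) (n : ℕ) : MvPolynomial ℕ K :=
  ∑ m ∈ S.sym n, (Multiset.map X m.1).prod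

/-- the plethystic evaluation h_i[(1-q)·Z] where Z is the sum of the variables in `S` -/
noncomputable def hq (S : Finset ℕ) (i : ℕ) : MvPolynomial ℕ K :=
  ∑ b ∈ Finset.range (i + 1), ((-q) ^ b) • (myE S b * myH S (i - b))

lemma q_ne_one : q ≠ 1 := by
  intro h
  have := congrArg RatFunc.num h
  rw [show RatFunc.num q = Polynomial.X from RatFunc.num_X, RatFunc.num_one] at this
  exact Polynomial.X_ne_C (1:ℚ) (by simpa using this)

lemma one_sub_q_ne_zero : (1 : K) - q ≠ 0 :=
  sub_ne_zero_of_ne (Ne.symm q_ne_one)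

lemma myE_zero (S : Finset ℕ) : myE S 0 = 1 := by
  simp [myE]

lemma myH_zero (S : Finset ℕ) : myH S 0 = 1 := by
  rw [myH, Finset.sym_zero, Finset.sum_singleton]
  show (Multiset.map X (0 : Multiset ℕ)).prod = 1
  simp

lemma hq_zero (S : Finset ℕ) : hq S 0 = 1 := by
  simp [hq, myE_zero, myH_zero]

lemma myE_empty (n : ℕ) : myE ∅ (n + 1) = 0 := by
  rw [myE, Finset.powersetCard_eq_empty.2 (by simp)]
  simp

lemma myH_empty (n : ℕ) : myH ∅ (n + 1) = 0 := by
  simp [myH]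

lemma hq_empty (i : ℕ) (hi : 1 ≤ i) : hq ∅ i = 0 := by
  obtain ⟨n, rfl⟩ := Nat.exists_eq_add_of_le hi
  unfold hq
  apply Finset.sum_eq_zero
  intro b hb
  simp only [Finset.mem_range] at hb
  rcases Nat.eq_zero_or_pos b with rfl | hbpos
  · have : 1 + n - 0 = n + 1 := by omega
    rw [this, myH_empty]
    simp
  · obtain ⟨c, rfl⟩ := Nat.exists_eq_add_of_le hbpos
    rw [show 1 + c = c + 1 from by omega, myE_empty]
    simp

lemma myE_insert {j : ℕ} {S : Finset ℕ} (hj : j ∉ S) (n : ℕ) :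
    myE (insert j S) (n + 1) = myE S (n + 1) + X j * myE S n := by
  unfold myE
  rw [Finset.powersetCard_succ_insert hj, Finset.sum_union, Finset.sum_image, Finset.mul_sum]
  · congr 1
    apply Finset.sum_congr rfl
    intro T hT
    have hjT : j ∉ T := fun h => hj ((Finset.mem_powersetCard.1 hT).1 h)
    rw [Finset.prod_insert hjT]
  · intro T1 h1 T2 h2 h
    have hj1 : j ∉ T1 := fun h => hj ((Finset.mem_powersetCard.1 h1).1 h)
    have hj2 : j ∉ T2 := fun h => hj ((Finset.mem_powersetCard.1 h2).1 h)
    rw [← Finset.erase_insert hj1, ← Finset.erase_insert hj2, h]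
  · rw [Finset.disjoint_left]
    intro T hT hT'
    have hjT : j ∉ T := fun h => hj ((Finset.mem_powersetCard.1 hT).1 h)
    obtain ⟨T', _, rfl⟩ := Finset.mem_image.1 hT'
    exact hjT (Finset.mem_insert_self _ _)

lemma sym_insert_decomp {j : ℕ} {S : Finset ℕ} (hj : j ∉ S) (n : ℕ) :
    (insert j S).sym (n + 1) = S.sym (n + 1) ∪ ((insert j S).sym n).image (Sym.cons j) := by
  ext m
  simp only [Finset.mem_sym_iff, Finset.mem_union, Finset.mem_image]
  constructor
  · intro h
    by_cases hjm : j ∈ m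
    · obtain ⟨t, rfl⟩ := Sym.exists_cons_of_mem hjm
      right
      exact ⟨t, fun a ha => h a (Sym.mem_cons_of_mem ha), rfl⟩
    · left
      intro a ha
      rcases Finset.mem_insert.1 (h a ha) with rfl | haS
      · exact absurd ha hjm
      · exact haS
  · rintro (h | ⟨t, ht, rfl⟩)
    · exact fun a ha => Finset.mem_insert_of_mem (h a ha)
    · intro a ha
      rcases Sym.mem_cons.1 ha with rfl | hat
      · exact Finset.mem_insert_self _ _
      · exact ht a hat

lemma myH_insert {j : ℕ} {S : Finset ℕ} (hj : j ∉ S) (n : ℕ) :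
    myH (insert j S) (n + 1) = X j * myH (insert j S) n + myH S (n + 1) := by
  unfold myH
  rw [sym_insert_decomp hj, Finset.sum_union, Finset.sum_image, Finset.mul_sum, add_comm]
  · congr 1
    apply Finset.sum_congr rfl
    intro t _
    show (Multiset.map X (j ::ₘ (t : Multiset ℕ))).prod = X j * (Multiset.map X (t : Multiset ℕ)).prod
    rw [Multiset.map_cons, Multiset.prod_cons]
  · intro t1 _ t2 _ h
    exact (Sym.cons_inj_right j t1 t2).1 h
  · rw [Finset.disjoint_left]
    intro m hm hm'
    obtain ⟨t, _, rfl⟩ := Finset.mem_image.1 hm'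
    exact hj (Finset.mem_sym_iff.1 hm j (Sym.mem_cons_self j t))

lemma hq_eq (S : Finset ℕ) (i : ℕ) :
    hq S i = ∑ b ∈ Finset.range (i + 1), C ((-q) ^ b) * (myE S b * myH S (i - b)) := by
  unfold hq
  apply Finset.sum_congr rfl
  intro b _
  rw [smul_eq_C_mul]

lemma hq_insert {j : ℕ} {S : Finset ℕ} (hj : j ∉ S) (n : ℕ) :
    hq (insert j S) (n + 1) =
      X j * hq (insert j S) n + hq S (n + 1) - C q * X j * hq S n := by
  have e1 : hq (insert j S) (n + 1) = X j * hq (insert j S) n +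
      ∑ b ∈ Finset.range (n + 2), C ((-q) ^ b) * (myE (insert j S) b * myH S (n + 1 - b)) := by
    rw [hq_eq, Finset.sum_range_succ]
    have last : C ((-q) ^ (n + 1)) * (myE (insert j S) (n + 1) * myH (insert j S) (n + 1 - (n + 1)))
        = C ((-q) ^ (n + 1)) * (myE (insert j S) (n + 1) * myH S (n + 1 - (n + 1))) := by
      rw [Nat.sub_self, myH_zero, myH_zero]
    rw [last]
    have main : ∑ b ∈ Finset.range (n + 1),
          C ((-q) ^ b) * (myE (insert j S) b * myH (insert j S) (n + 1 - b))
        = ∑ b ∈ Finset.range (n + 1),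
          (X j * (C ((-q) ^ b) * (myE (insert j S) b * myH (insert j S) (n - b)))
            + C ((-q) ^ b) * (myE (insert j S) b * myH S (n + 1 - b))) := by
      apply Finset.sum_congr rfl
      intro b hb
      have hb' : b ≤ n := Nat.lt_succ_iff.1 (Finset.mem_range.1 hb)
      rw [show n + 1 - b = (n - b) + 1 by omega, myH_insert hj]
      ring
    have T_def : ∑ b ∈ Finset.range (n + 2), C ((-q) ^ b) * (myE (insert j S) b * myH S (n + 1 - b))
        = (∑ b ∈ Finset.range (n + 1), C ((-q) ^ b) * (myE (insert j S) b * myH S (n + 1 - b)))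
          + C ((-q) ^ (n + 1)) * (myE (insert j S) (n + 1) * myH S (n + 1 - (n + 1))) := by
      rw [show n + 2 = (n + 1) + 1 by omega, Finset.sum_range_succ]
    rw [main, Finset.sum_add_distrib, ← Finset.mul_sum, ← hq_eq, T_def]
    ring
  rw [e1]
  have e2 : ∑ b ∈ Finset.range (n + 2), C ((-q) ^ b) * (myE (insert j S) b * myH S (n + 1 - b))
      = hq S (n + 1) - C q * X j * hq S n := by
    rw [Finset.sum_range_succ']
    have main : ∀ b ∈ Finset.range (n + 1),
        C ((-q) ^ (b + 1)) * (myE (insert j S) (b + 1) * myH S (n + 1 - (b + 1)))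
        = C ((-q) ^ (b + 1)) * (myE S (b + 1) * myH S (n - b))
          - C q * X j * (C ((-q) ^ b) * (myE S b * myH S (n - b))) := by
      intro b _
      rw [show n + 1 - (b + 1) = n - b by omega, myE_insert hj, pow_succ, map_mul,
        map_neg]
      ring
    rw [Finset.sum_congr rfl main, Finset.sum_sub_distrib, ← Finset.mul_sum, ← hq_eq]
    have e3 : hq S (n + 1) = (∑ b ∈ Finset.range (n + 1),
        C ((-q) ^ (b + 1)) * (myE S (b + 1) * myH S (n - b)))
        + C ((-q) ^ 0) * (myE S 0 * myH S (n + 1 - 0)) := by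
      rw [hq_eq, Finset.sum_range_succ']
      apply congrArg₂ _ (Finset.sum_congr rfl ?_) rfl
      intro b _
      rw [show n + 1 - (b + 1) = n - b by omega]
    rw [e3]
    have e4 : myE (insert j S) 0 = myE S 0 := by rw [myE_zero, myE_zero]
    rw [e4]
    ring
  rw [e2]
  ring

lemma rename_myE (σ : ℕ ≃ ℕ) (S : Finset ℕ) (n : ℕ) :
    rename (σ : ℕ → ℕ) (myE S n) = myE (S.image σ) n := by
  unfold myE
  rw [map_sum]
  refine Finset.sum_nbij' (fun T => T.image σ) (fun T => T.image σ.symm) ?_ ?_ ?_ ?_ ?_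
  · intro T hT
    rw [Finset.mem_powersetCard] at hT ⊢
    exact ⟨Finset.image_subset_image hT.1, (Finset.card_image_of_injective _ σ.injective).trans hT.2⟩
  · intro T hT
    rw [Finset.mem_powersetCard] at hT ⊢
    constructor
    · intro x hx
      obtain ⟨y, hy, rfl⟩ := Finset.mem_image.1 hx
      obtain ⟨z, hz, rfl⟩ := Finset.mem_image.1 (hT.1 hy)
      simpa using hz
    · exact (Finset.card_image_of_injective _ σ.symm.injective).trans hT.2
  · intro T _
    rw [Finset.image_image]
    simp
  · intro T _
    rw [Finset.image_image]
    simp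
  · intro T _
    rw [map_prod, Finset.prod_image (fun x _ y _ h => σ.injective h)]
    simp [rename_X]

lemma rename_myH (σ : ℕ ≃ ℕ) (S : Finset ℕ) (n : ℕ) :
    rename (σ : ℕ → ℕ) (myH S n) = myH (S.image σ) n := by
  unfold myH
  rw [map_sum]
  refine Finset.sum_nbij' (fun m => m.map σ) (fun m => m.map σ.symm) ?_ ?_ ?_ ?_ ?_
  · intro m hm
    rw [Finset.mem_sym_iff] at hm ⊢
    intro a ha
    obtain ⟨b, hb, rfl⟩ := Sym.mem_map.1 ha
    exact Finset.mem_image_of_mem _ (hm b hb)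
  · intro m hm
    rw [Finset.mem_sym_iff] at hm ⊢
    intro a ha
    obtain ⟨b, hb, rfl⟩ := Sym.mem_map.1 ha
    obtain ⟨z, hz, rfl⟩ := Finset.mem_image.1 (hm b hb)
    simpa using hz
  · intro m _
    rw [Sym.map_map]
    simp
  · intro m _
    rw [Sym.map_map]
    simp
  · intro m _
    rw [map_multiset_prod, Multiset.map_map]
    show (Multiset.map (⇑(rename (σ : ℕ → ℕ)) ∘ X) m.1).prod
      = (Multiset.map X (Multiset.map (σ : ℕ → ℕ) m.1)).prod
    rw [Multiset.map_map]
    congr 1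
    apply Multiset.map_congr rfl
    intro x _
    simp [rename_X]

lemma rename_hq (σ : ℕ ≃ ℕ) (S : Finset ℕ) (i : ℕ) :
    rename (σ : ℕ → ℕ) (hq S i) = hq (S.image σ) i := by
  rw [hq_eq, hq_eq, map_sum]
  apply Finset.sum_congr rfl
  intro b _
  rw [map_mul, map_mul, rename_C, rename_myE, rename_myH]

lemma key (u v : MvPolynomial ℕ K) (G A B P : ℕ → MvPolynomial ℕ K)
    (hG0 : G 0 = 1) (hA0 : A 0 = 1) (hB0 : B 0 = 1) (hP0 : P 0 = 1)
    (hA : ∀ n, A (n + 1) = u * A n + G (n + 1) - C q * u * G n)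
    (hB : ∀ n, B (n + 1) = v * B n + G (n + 1) - C q * v * G n)
    (hP : ∀ n, P (n + 1) = v * P n + A (n + 1) - C q * v * A n) :
    ∀ n, (v - u) * (P n - A n) = (C q - 1) * v * (A n - G n) + (v - C q * u) * (B n - G n) := by
  intro n
  induction n with
  | zero => rw [hG0, hA0, hB0, hP0]; ring
  | succ n ih =>
    rw [hP n, hA n, hB n]
    linear_combination v * ih

lemma hq_singleton (j : ℕ) (n : ℕ) : hq {j} (n + 1) = C (1 - q) * X j ^ (n + 1) := by
  induction n with
  | zero =>
    rw [show ({j} : Finset ℕ) = insert j ∅ from rfl, hq_insert (Finset.notMem_empty j) 0]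
    rw [hq_zero, hq_empty 1 le_rfl, hq_zero, map_sub, map_one]
    ring
  | succ n ih =>
    rw [show ({j} : Finset ℕ) = insert j ∅ from rfl, hq_insert (Finset.notMem_empty j) (n + 1)]
    rw [show (insert j ∅ : Finset ℕ) = {j} from rfl, ih,
      hq_empty (n + 2) (by omega), hq_empty (n + 1) (by omega)]
    ring


theorem f_ir_telescoping_sum (i : ℕ) (hi : 1 ≤ i)
    (D : ℕ → MvPolynomial ℕ K → MvPolynomial ℕ K)
    (hD : ∀ (r : ℕ) (P : MvPolynomial ℕ K),
      (X (r + 1) - X r) * D r P =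
        C (q - 1) * X (r + 1) * P + (X (r + 1) - C q * X r) * rename (Equiv.swap r (r + 1)) P)
    (f : ℕ → MvPolynomial ℕ K)
    (hf0 : f 0 = X 0 ^ i)
    (hfs : ∀ r : ℕ, f (r + 1) = D r (f r)) :
    ∀ R : ℕ, ∑ r ∈ Finset.range (R + 1), f r =
      C (1 - q)⁻¹ * hq (Finset.range (R + 1)) i := by
  have main : ∀ r : ℕ, f r = C (1 - q)⁻¹ *
      (hq (Finset.range (r + 1)) i - hq (Finset.range r) i) := by
    intro r
    induction r with
    | zero =>
      rw [hf0, show Finset.range 0 = ∅ from rfl, hq_empty i hi,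
        show Finset.range 1 = {0} from rfl]
      obtain ⟨n, rfl⟩ : ∃ n, i = n + 1 := ⟨i - 1, by omega⟩
      rw [hq_singleton, sub_zero, ← mul_assoc, ← map_mul,
        inv_mul_cancel₀ one_sub_q_ne_zero, map_one, one_mul]
    | succ r ih =>
      rw [hfs r, ih]
      have hr : r ∉ Finset.range r := by simp
      have hr1 : (r + 1) ∉ Finset.range r := by simp
      have hr2 : (r + 1) ∉ Finset.range (r + 1) := by simp
      have hA : ∀ n, hq (Finset.range (r + 1)) (n + 1) = X r * hq (Finset.range (r + 1)) n
          + hq (Finset.range r) (n + 1) - C q * X r * hq (Finset.range r) n := by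
        intro n
        conv_lhs => rw [Finset.range_add_one]
        conv_rhs => rw [Finset.range_add_one]
        exact hq_insert hr n
      have hB : ∀ n, hq (insert (r + 1) (Finset.range r)) (n + 1)
          = X (r + 1) * hq (insert (r + 1) (Finset.range r)) n
            + hq (Finset.range r) (n + 1) - C q * X (r + 1) * hq (Finset.range r) n :=
        fun n => hq_insert hr1 n
      have hP : ∀ n, hq (Finset.range (r + 1 + 1)) (n + 1)
          = X (r + 1) * hq (Finset.range (r + 1 + 1)) n
            + hq (Finset.range (r + 1)) (n + 1) - C q * X (r + 1) * hq (Finset.range (r + 1)) n := by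
        intro n
        conv_lhs => rw [show Finset.range (r + 1 + 1) = insert (r + 1) (Finset.range (r + 1)) from
          Finset.range_add_one]
        conv_rhs => rw [show Finset.range (r + 1 + 1) = insert (r + 1) (Finset.range (r + 1)) from
          Finset.range_add_one]
        exact hq_insert hr2 n
      have hkey := key (X r) (X (r + 1)) (fun n => hq (Finset.range r) n)
        (fun n => hq (Finset.range (r + 1)) n)
        (fun n => hq (insert (r + 1) (Finset.range r)) n)
        (fun n => hq (Finset.range (r + 1 + 1)) n)
        (hq_zero _) (hq_zero _) (hq_zero _) (hq_zero _) hA hB hP i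
      have himg1 : (Finset.range r).image (Equiv.swap r (r + 1) : ℕ → ℕ) = Finset.range r := by
        rw [Finset.image_congr (g := id) ?_, Finset.image_id]
        intro x hx
        simp only [Finset.coe_range, Set.mem_Iio] at hx
        exact Equiv.swap_apply_of_ne_of_ne (by omega) (by omega)
      have himg2 : (Finset.range (r + 1)).image (Equiv.swap r (r + 1) : ℕ → ℕ)
          = insert (r + 1) (Finset.range r) := by
        rw [Finset.range_add_one, Finset.image_insert, Equiv.swap_apply_left, himg1]
      have hren : rename ((Equiv.swap r (r + 1) : ℕ ≃ ℕ) : ℕ → ℕ)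
          (C (1 - q)⁻¹ * (hq (Finset.range (r + 1)) i - hq (Finset.range r) i))
          = C (1 - q)⁻¹ * (hq (insert (r + 1) (Finset.range r)) i - hq (Finset.range r) i) := by
        rw [map_mul, rename_C, map_sub, rename_hq, rename_hq, himg1, himg2]
      have hne : (X (r + 1) - X r : MvPolynomial ℕ K) ≠ 0 :=
        sub_ne_zero_of_ne (fun h => by simpa using (X_injective h : r + 1 = r))
      apply mul_left_cancel₀ hne
      rw [hD r _, hren]
      have hc : (C (q - 1) : MvPolynomial ℕ K) = C q - 1 := by rw [map_sub, map_one]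
      rw [hc]
      linear_combination (-(C ((1 - q)⁻¹) : MvPolynomial ℕ K)) * hkey
  intro R
  calc ∑ r ∈ Finset.range (R + 1), f r
      = ∑ r ∈ Finset.range (R + 1),
        C (1 - q)⁻¹ * (hq (Finset.range (r + 1)) i - hq (Finset.range r) i) :=
        Finset.sum_congr rfl (fun r _ => main r)
    _ = C (1 - q)⁻¹ * ∑ r ∈ Finset.range (R + 1),
        (hq (Finset.range (r + 1)) i - hq (Finset.range r) i) := by rw [Finset.mul_sum]
    _ = C (1 - q)⁻¹ * (hq (Finset.range (R + 1)) i - hq (Finset.range 0) i) := by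
        rw [Finset.sum_range_sub (fun m => hq (Finset.range m) i)]
    _ = C (1 - q)⁻¹ * hq (Finset.range (R + 1)) i := by
        rw [show Finset.range 0 = ∅ from rfl, hq_empty i hi, sub_zero]

end
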